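/- Let H₀ be a skew-symmetric operator and let (𝒢, Γ₁, Γ₂) be a boundary triplet for H₀. Then an operator H ⊇ H₀ is skew-self-adjoint if and only if there exists a unitary operator L : 𝒢 → 𝒢 such that D(H) = {x ∈ D(H₀*) : (L − 1)Γ₁x + (L + 1)Γ₂x = 0} and Hx = −H₀*x for all x ∈ D(H). -/

import Mathlib

open scoped InnerProductSpace

set_option linter.unusedSectionVars false
set_option maxHeartbeats 1000000



section Aux
variable {ℋ 𝒢 : Type*}
    [NormedAddCommGroup ℋ] [InnerProductSpace ℂ ℋ] [CompleteSpace ℋ]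
    [NormedAddCommGroup 𝒢] [InnerProductSpace ℂ 𝒢] [CompleteSpace 𝒢]

/-- The adjoint is antitone. -/
lemma stmt12_adj_anti {T S : ℋ →ₗ.[ℂ] ℋ} (hT : Dense (T.domain : Set ℋ)) (h : T ≤ S) :
    S.adjoint ≤ T.adjoint := by
  have hS : Dense (S.domain : Set ℋ) := hT.mono (by exact_mod_cast h.1)
  constructor
  · intro y hy
    apply LinearPMap.mem_adjoint_domain_of_exists
    refine ⟨S.adjoint ⟨y, hy⟩, fun x => ?_⟩
    rw [LinearPMap.apply_comp_inclusion h x]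
    exact LinearPMap.adjoint_isFormalAdjoint hS ⟨y, hy⟩ (Submodule.inclusion h.1 x)
  · intro x y hxy
    symm
    apply LinearPMap.adjoint_apply_eq hT
    intro v
    have h1 := LinearPMap.adjoint_isFormalAdjoint hS x (Submodule.inclusion h.1 v)
    rw [← LinearPMap.apply_comp_inclusion h v] at h1
    have : ((Submodule.inclusion h.1 v : S.domain) : ℋ) = (v : ℋ) := rfl
    rw [this] at h1
    rw [h1, ← hxy]

lemma stmt12_polar (a b c d : 𝒢) :
    ⟪a, d⟫_ℂ + ⟪b, c⟫_ℂ = (⟪a + b, c + d⟫_ℂ - ⟪a - b, c - d⟫_ℂ) / 2 := by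
  simp only [inner_add_left, inner_add_right, inner_sub_left, inner_sub_right]
  ring

end Aux

section Aux
variable {ℋ 𝒢 : Type*}
    [NormedAddCommGroup ℋ] [InnerProductSpace ℂ ℋ] [CompleteSpace ℋ]
    [NormedAddCommGroup 𝒢] [InnerProductSpace ℂ 𝒢] [CompleteSpace 𝒢]
    {H₀ H : ℋ →ₗ.[ℂ] ℋ}
    {Γ₁ Γ₂ : H₀.adjoint.domain →ₗ[ℂ] 𝒢}

/-- lemma (a) : if the boundary form of `y` against all of `D(H)` vanishes, then
`y ∈ D(H*)` and `H* y = H₀* y`. -/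
lemma stmt12_lemA (hdense : Dense (H₀.domain : Set ℋ))
    (hGreen : ∀ x y : H₀.adjoint.domain,
      ⟪H₀.adjoint x, (y : ℋ)⟫_ℂ + ⟪(x : ℋ), H₀.adjoint y⟫_ℂ
        = ⟪Γ₁ x, Γ₂ y⟫_ℂ + ⟪Γ₂ x, Γ₁ y⟫_ℂ)
    (hext : H₀ ≤ H)
    (hsubH : H.domain ≤ H₀.adjoint.domain)
    (hHval : ∀ x : H.domain, H x = -(H₀.adjoint ⟨(x : ℋ), hsubH x.2⟩))
    (y : H₀.adjoint.domain)
    (hbd : ∀ x : H.domain,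
      ⟪Γ₁ ⟨(x : ℋ), hsubH x.2⟩, Γ₂ y⟫_ℂ + ⟪Γ₂ ⟨(x : ℋ), hsubH x.2⟩, Γ₁ y⟫_ℂ = 0) :
    ∃ hy : (y : ℋ) ∈ H.adjoint.domain, H.adjoint ⟨(y : ℋ), hy⟩ = H₀.adjoint y := by
  have hHdense : Dense (H.domain : Set ℋ) := hdense.mono (by exact_mod_cast hext.1)
  have key : ∀ x : H.domain, ⟪H₀.adjoint y, (x : ℋ)⟫_ℂ = ⟪(y : ℋ), H x⟫_ℂ := by
    intro x
    have hg := hGreen ⟨(x : ℋ), hsubH x.2⟩ y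
    rw [hbd x] at hg
    have h1 : ⟪((⟨(x : ℋ), hsubH x.2⟩ : H₀.adjoint.domain) : ℋ), H₀.adjoint y⟫_ℂ
        = ⟪(x : ℋ), H₀.adjoint y⟫_ℂ := rfl
    rw [h1] at hg
    have h2 : ⟪(x : ℋ), H₀.adjoint y⟫_ℂ = -⟪H₀.adjoint ⟨(x : ℋ), hsubH x.2⟩, (y : ℋ)⟫_ℂ := by
      linear_combination hg
    calc ⟪H₀.adjoint y, (x : ℋ)⟫_ℂ
        = starRingEnd ℂ ⟪(x : ℋ), H₀.adjoint y⟫_ℂ := (inner_conj_symm _ _).symm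
      _ = starRingEnd ℂ (-⟪H₀.adjoint ⟨(x : ℋ), hsubH x.2⟩, (y : ℋ)⟫_ℂ) := by rw [h2]
      _ = -⟪(y : ℋ), H₀.adjoint ⟨(x : ℋ), hsubH x.2⟩⟫_ℂ := by
          rw [map_neg, inner_conj_symm]
      _ = ⟪(y : ℋ), H x⟫_ℂ := by rw [hHval x, inner_neg_right]
  have hy : (y : ℋ) ∈ H.adjoint.domain :=
    LinearPMap.mem_adjoint_domain_of_exists _ ⟨H₀.adjoint y, key⟩
  exact ⟨hy, LinearPMap.adjoint_apply_eq hHdense ⟨(y : ℋ), hy⟩ key⟩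

/-- lemma (b) : if `y ∈ D(H*)` then `y ∈ D(H₀*)`, `H* y = H₀* y` and the boundary
form of `y` against all of `D(H)` vanishes. -/
lemma stmt12_lemB (hdense : Dense (H₀.domain : Set ℋ))
    (hGreen : ∀ x y : H₀.adjoint.domain,
      ⟪H₀.adjoint x, (y : ℋ)⟫_ℂ + ⟪(x : ℋ), H₀.adjoint y⟫_ℂ
        = ⟪Γ₁ x, Γ₂ y⟫_ℂ + ⟪Γ₂ x, Γ₁ y⟫_ℂ)
    (hext : H₀ ≤ H)
    (hsubH : H.domain ≤ H₀.adjoint.domain)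
    (hHval : ∀ x : H.domain, H x = -(H₀.adjoint ⟨(x : ℋ), hsubH x.2⟩))
    (y : H.adjoint.domain) :
    ∃ hy : (y : ℋ) ∈ H₀.adjoint.domain, H.adjoint y = H₀.adjoint ⟨(y : ℋ), hy⟩ ∧
      ∀ x : H.domain,
        ⟪Γ₁ ⟨(x : ℋ), hsubH x.2⟩, Γ₂ (⟨(y : ℋ), hy⟩ : H₀.adjoint.domain)⟫_ℂ
          + ⟪Γ₂ ⟨(x : ℋ), hsubH x.2⟩, Γ₁ (⟨(y : ℋ), hy⟩ : H₀.adjoint.domain)⟫_ℂ = 0 := by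
  have hHdense : Dense (H.domain : Set ℋ) := hdense.mono (by exact_mod_cast hext.1)
  have hadjH : H.adjoint ≤ H₀.adjoint := stmt12_adj_anti hdense hext
  have hy : (y : ℋ) ∈ H₀.adjoint.domain := hadjH.1 y.2
  have hval : H.adjoint y = H₀.adjoint ⟨(y : ℋ), hy⟩ := hadjH.2 rfl
  refine ⟨hy, hval, fun x => ?_⟩
  have hg := hGreen ⟨(x : ℋ), hsubH x.2⟩ ⟨(y : ℋ), hy⟩
  have h1 : ⟪H₀.adjoint ⟨(x : ℋ), hsubH x.2⟩, (y : ℋ)⟫_ℂ = -⟪H x, (y : ℋ)⟫_ℂ := by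
    rw [hHval x, inner_neg_left, neg_neg]
  have h2 : ⟪(x : ℋ), H₀.adjoint ⟨(y : ℋ), hy⟩⟫_ℂ = ⟪H x, (y : ℋ)⟫_ℂ := by
    rw [← hval]
    calc ⟪(x : ℋ), H.adjoint y⟫_ℂ
        = starRingEnd ℂ ⟪H.adjoint y, (x : ℋ)⟫_ℂ := (inner_conj_symm _ _).symm
      _ = starRingEnd ℂ ⟪(y : ℋ), H x⟫_ℂ := by
          rw [LinearPMap.adjoint_isFormalAdjoint hHdense y x]
      _ = ⟪H x, (y : ℋ)⟫_ℂ := inner_conj_symm _ _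
  rw [← hg, h1, h2]
  ring
end Aux

section Aux2
variable {ℋ 𝒢 : Type*}
    [NormedAddCommGroup ℋ] [InnerProductSpace ℂ ℋ] [CompleteSpace ℋ]
    [NormedAddCommGroup 𝒢] [InnerProductSpace ℂ 𝒢] [CompleteSpace 𝒢]
    {H₀ H : ℋ →ₗ.[ℂ] ℋ}
    {Γ₁ Γ₂ : H₀.adjoint.domain →ₗ[ℂ] 𝒢}

lemma stmt12_mpr (hdense : Dense (H₀.domain : Set ℋ))
    (hΓsurj : Function.Surjective fun x : H₀.adjoint.domain => (Γ₁ x, Γ₂ x))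
    (hGreen : ∀ x y : H₀.adjoint.domain,
      ⟪H₀.adjoint x, (y : ℋ)⟫_ℂ + ⟪(x : ℋ), H₀.adjoint y⟫_ℂ
        = ⟪Γ₁ x, Γ₂ y⟫_ℂ + ⟪Γ₂ x, Γ₁ y⟫_ℂ)
    (hext : H₀ ≤ H)
    (L : 𝒢 ≃ₗᵢ[ℂ] 𝒢)
    (hdom : (H.domain : Set ℋ) = {x : ℋ | ∃ hx : x ∈ H₀.adjoint.domain,
        (L (Γ₁ (⟨x, hx⟩ : H₀.adjoint.domain)) - Γ₁ (⟨x, hx⟩ : H₀.adjoint.domain)) +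
          (L (Γ₂ (⟨x, hx⟩ : H₀.adjoint.domain)) + Γ₂ (⟨x, hx⟩ : H₀.adjoint.domain)) = 0})
    (hact : ∀ x : H.domain, ∃ hx : (x : ℋ) ∈ H₀.adjoint.domain,
        H x = -H₀.adjoint (⟨(x : ℋ), hx⟩ : H₀.adjoint.domain)) :
    H = -H.adjoint := by
  have hHdense : Dense (H.domain : Set ℋ) := hdense.mono (by exact_mod_cast hext.1)
  have hsubH : H.domain ≤ H₀.adjoint.domain := fun z hz => (hact ⟨z, hz⟩).choose
  have hHval : ∀ x : H.domain, H x = -(H₀.adjoint ⟨(x : ℋ), hsubH x.2⟩) :=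
    fun x => (hact x).choose_spec
  -- reformulated domain condition
  have hcond : ∀ z : H₀.adjoint.domain,
      ((z : ℋ) ∈ H.domain ↔ L (Γ₁ z + Γ₂ z) = Γ₁ z - Γ₂ z) := by
    intro z
    have hre : ∀ w : H₀.adjoint.domain,
        (L (Γ₁ w) - Γ₁ w) + (L (Γ₂ w) + Γ₂ w) = L (Γ₁ w + Γ₂ w) - (Γ₁ w - Γ₂ w) := by
      intro w; rw [map_add]; abel
    rw [← SetLike.mem_coe, hdom]
    constructor
    · rintro ⟨hz, h0⟩
      have hzz : (⟨(z : ℋ), hz⟩ : H₀.adjoint.domain) = z := Subtype.ext rfl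
      rw [hzz, hre z, sub_eq_zero] at h0
      exact h0
    · intro hc
      refine ⟨z.2, ?_⟩
      have hzz : (⟨(z : ℋ), z.2⟩ : H₀.adjoint.domain) = z := Subtype.ext rfl
      rw [hzz, hre z, sub_eq_zero]
      exact hc
  -- boundary form vanishes on `D(H) × D(H)`
  have hbd0 : ∀ x y : H.domain,
      ⟪Γ₁ ⟨(x : ℋ), hsubH x.2⟩, Γ₂ ⟨(y : ℋ), hsubH y.2⟩⟫_ℂ
        + ⟪Γ₂ ⟨(x : ℋ), hsubH x.2⟩, Γ₁ ⟨(y : ℋ), hsubH y.2⟩⟫_ℂ = 0 := by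
    intro x y
    set a := Γ₁ ⟨(x : ℋ), hsubH x.2⟩
    set b := Γ₂ ⟨(x : ℋ), hsubH x.2⟩
    set c := Γ₁ ⟨(y : ℋ), hsubH y.2⟩
    set d := Γ₂ ⟨(y : ℋ), hsubH y.2⟩
    have hx := (hcond ⟨(x : ℋ), hsubH x.2⟩).mp x.2
    have hy := (hcond ⟨(y : ℋ), hsubH y.2⟩).mp y.2
    have h1 : ⟪a - b, c - d⟫_ℂ = ⟪a + b, c + d⟫_ℂ := by
      rw [← hx, ← hy, LinearIsometryEquiv.inner_map_map]
    rw [stmt12_polar a b c d, h1, sub_self, zero_div]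
  have le1 : H ≤ -H.adjoint := by
    constructor
    · intro z hz
      exact (stmt12_lemA hdense hGreen hext hsubH hHval ⟨z, hsubH hz⟩
        (fun x => hbd0 x ⟨z, hz⟩)).choose
    · intro x y hxy
      obtain ⟨hy, hval⟩ := stmt12_lemA hdense hGreen hext hsubH hHval
        ⟨(x : ℋ), hsubH x.2⟩ (fun v => hbd0 v x)
      have h1 : (-H.adjoint) y = -(H.adjoint y) := LinearPMap.neg_apply _ _
      have hyy : (y : H.adjoint.domain) = (⟨(x : ℋ), hy⟩ : H.adjoint.domain) :=
        Subtype.ext hxy.symm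
      rw [h1]
      show H x = -(H.adjoint y)
      rw [show (H.adjoint y : ℋ) = H.adjoint (⟨(x : ℋ), hy⟩ : H.adjoint.domain) from
        congrArg _ hyy]
      rw [hval, hHval x]
  have le2 : -H.adjoint ≤ H := by
    constructor
    · intro z hz
      obtain ⟨hz0, hval, hbd⟩ := stmt12_lemB hdense hGreen hext hsubH hHval ⟨z, hz⟩
      set c := Γ₁ (⟨z, hz0⟩ : H₀.adjoint.domain)
      set d := Γ₂ (⟨z, hz0⟩ : H₀.adjoint.domain)
      have key : ∀ u : 𝒢, ⟪u, c + d⟫_ℂ = ⟪u, L.symm (c - d)⟫_ℂ := by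
        intro u
        obtain ⟨w, hw⟩ := hΓsurj (u + L u, u - L u)
        have hw1 : Γ₁ w = u + L u := congrArg Prod.fst hw
        have hw2 : Γ₂ w = u - L u := congrArg Prod.snd hw
        have hwcond : L (Γ₁ w + Γ₂ w) = Γ₁ w - Γ₂ w := by
          rw [hw1, hw2, show u + L u + (u - L u) = u + u from by abel, map_add]
          abel
        have hwmem : (w : ℋ) ∈ H.domain := (hcond w).mpr hwcond
        have hbdw := hbd ⟨(w : ℋ), hwmem⟩
        have hXw : (⟨((⟨(w : ℋ), hwmem⟩ : H.domain) : ℋ), hsubH hwmem⟩ :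
            H₀.adjoint.domain) = w := Subtype.ext rfl
        rw [hXw, hw1, hw2] at hbdw
        have hLsymm : ⟪L u, c - d⟫_ℂ = ⟪u, L.symm (c - d)⟫_ℂ := by
          conv_lhs => rw [← L.apply_symm_apply (c - d)]
          rw [LinearIsometryEquiv.inner_map_map]
        rw [← hLsymm]
        simp only [inner_add_left, inner_add_right, inner_sub_left, inner_sub_right] at hbdw ⊢
        linear_combination hbdw
      have hcd : c + d = L.symm (c - d) := ext_inner_left ℂ key
      have hc : L (c + d) = c - d := by rw [hcd, L.apply_symm_apply]
      exact (hcond ⟨z, hz0⟩).mpr hc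
    · intro x y hxy
      obtain ⟨hx0, hval, _⟩ := stmt12_lemB hdense hGreen hext hsubH hHval x
      show -(H.adjoint x) = H y
      rw [hval, hHval y]
      congr 1
      exact congrArg _ (Subtype.ext hxy)
  exact le_antisymm le1 le2
end Aux2

/-- From a pair of linear maps with equal Gram inner products and dense ranges,
construct a unitary intertwining them. -/
lemma stmt12_unitary {E X : Type*} [NormedAddCommGroup E] [InnerProductSpace ℂ E]
    [CompleteSpace E] [AddCommGroup X] [Module ℂ X] (S T : X →ₗ[ℂ] E)
    (hST : ∀ x y, ⟪S x, S y⟫_ℂ = ⟪T x, T y⟫_ℂ)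
    (hS : Dense ((LinearMap.range S : Submodule ℂ E) : Set E))
    (hT : Dense ((LinearMap.range T : Submodule ℂ E) : Set E)) :
    ∃ L : E ≃ₗᵢ[ℂ] E, ∀ x, L (S x) = T x := by
  have hker : LinearMap.ker S ≤ LinearMap.ker T := by
    intro x hx
    rw [LinearMap.mem_ker] at hx ⊢
    rw [← inner_self_eq_zero (𝕜 := ℂ), ← hST, hx, inner_zero_left]
  let L₀ : LinearMap.range S →ₗ[ℂ] E :=
    (Submodule.liftQ (LinearMap.ker S) T hker).comp
      ((LinearMap.quotKerEquivRange S).symm : _ →ₗ[ℂ] _)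
  have hL₀ : ∀ x : X, L₀ ⟨S x, LinearMap.mem_range_self S x⟩ = T x := by
    intro x
    show (Submodule.liftQ (LinearMap.ker S) T hker)
      ((LinearMap.quotKerEquivRange S).symm ⟨S x, LinearMap.mem_range_self S x⟩) = T x
    rw [LinearMap.quotKerEquivRange_symm_apply_image]
    exact Submodule.liftQ_apply _ T x
  have hnorm : ∀ x : X, ‖T x‖ = ‖S x‖ := by
    intro x
    have h2 := (hST x x).symm
    rw [inner_self_eq_norm_sq_to_K, inner_self_eq_norm_sq_to_K] at h2
    have h3 : ‖T x‖ ^ 2 = ‖S x‖ ^ 2 := by exact_mod_cast h2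
    calc ‖T x‖ = Real.sqrt (‖T x‖ ^ 2) := (Real.sqrt_sq (norm_nonneg _)).symm
      _ = Real.sqrt (‖S x‖ ^ 2) := by rw [h3]
      _ = ‖S x‖ := Real.sqrt_sq (norm_nonneg _)
  have hL₀norm : ∀ m : LinearMap.range S, ‖L₀ m‖ = ‖(m : E)‖ := by
    rintro ⟨m, hm⟩
    obtain ⟨x, rfl⟩ := hm
    rw [hL₀ x]
    exact hnorm x
  let L₁ : LinearMap.range S →ₗᵢ[ℂ] E := ⟨L₀, hL₀norm⟩
  let F : E →L[ℂ] E :=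
    L₁.toContinuousLinearMap.extend (Submodule.subtypeL (LinearMap.range S))
  have hF : ∀ m : LinearMap.range S, F m = L₀ m := fun m =>
    ContinuousLinearMap.extend_eq _ hS.denseRange_val isUniformEmbedding_subtype_val.isUniformInducing m
  have hFnorm : ∀ u : E, ‖F u‖ = ‖u‖ := by
    have heq : Set.EqOn (fun u : E => ‖F u‖) (fun u : E => ‖u‖)
        ((LinearMap.range S : Submodule ℂ E) : Set E) := by
      intro m hm
      have h1 := hF ⟨m, hm⟩
      show ‖F m‖ = ‖m‖
      rw [h1, hL₀norm ⟨m, hm⟩]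
    have hcont : Continuous fun u : E => ‖F u‖ := F.continuous.norm
    have := Continuous.ext_on hS hcont continuous_norm heq
    exact fun u => congrFun this u
  let L₂ : E →ₗᵢ[ℂ] E := ⟨(F : E →ₗ[ℂ] E), hFnorm⟩
  have hL₂S : ∀ x : X, L₂ (S x) = T x := by
    intro x
    show F (S x) = T x
    rw [show S x = ((⟨S x, LinearMap.mem_range_self S x⟩ : LinearMap.range S) : E) from rfl,
      hF, hL₀ x]
  have hsurj : Function.Surjective L₂ := by
    have hclosed : IsClosed (Set.range ⇑L₂) := L₂.isometry.isClosedEmbedding.isClosed_range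
    have hNsub : ((LinearMap.range T : Submodule ℂ E) : Set E) ⊆ Set.range ⇑L₂ := by
      rintro v ⟨x, rfl⟩
      exact ⟨S x, hL₂S x⟩
    have hdenseR : Dense (Set.range ⇑L₂) := hT.mono hNsub
    have : Set.range ⇑L₂ = Set.univ := by
      rw [← hclosed.closure_eq, hdenseR.closure_eq]
    exact Set.range_eq_univ.mp this
  refine ⟨LinearIsometryEquiv.ofSurjective L₂ hsurj, fun x => ?_⟩
  have hco := LinearIsometryEquiv.coe_ofSurjective L₂ hsurj
  have : (LinearIsometryEquiv.ofSurjective L₂ hsurj) (S x) = L₂ (S x) := by rw [hco]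
  rw [this]
  exact hL₂S x
lemma stmt12_mp {ℋ 𝒢 : Type*}
    [NormedAddCommGroup ℋ] [InnerProductSpace ℂ ℋ] [CompleteSpace ℋ]
    [NormedAddCommGroup 𝒢] [InnerProductSpace ℂ 𝒢] [CompleteSpace 𝒢]
    {H₀ H : ℋ →ₗ.[ℂ] ℋ} {Γ₁ Γ₂ : H₀.adjoint.domain →ₗ[ℂ] 𝒢}
    (hdense : Dense (H₀.domain : Set ℋ))
    (hΓsurj : Function.Surjective fun x : H₀.adjoint.domain => (Γ₁ x, Γ₂ x))
    (hGreen : ∀ x y : H₀.adjoint.domain,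
      ⟪H₀.adjoint x, (y : ℋ)⟫_ℂ + ⟪(x : ℋ), H₀.adjoint y⟫_ℂ
        = ⟪Γ₁ x, Γ₂ y⟫_ℂ + ⟪Γ₂ x, Γ₁ y⟫_ℂ)
    (hext : H₀ ≤ H) (hH : H = -H.adjoint) :
    ∃ L : 𝒢 ≃ₗᵢ[ℂ] 𝒢,
      (H.domain : Set ℋ) = {x : ℋ | ∃ hx : x ∈ H₀.adjoint.domain,
          (L (Γ₁ (⟨x, hx⟩ : H₀.adjoint.domain)) - Γ₁ (⟨x, hx⟩ : H₀.adjoint.domain)) +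
            (L (Γ₂ (⟨x, hx⟩ : H₀.adjoint.domain)) + Γ₂ (⟨x, hx⟩ : H₀.adjoint.domain)) = 0} ∧
        ∀ x : H.domain, ∃ hx : (x : ℋ) ∈ H₀.adjoint.domain,
          H x = -H₀.adjoint (⟨(x : ℋ), hx⟩ : H₀.adjoint.domain) := by
  have hHdense : Dense (H.domain : Set ℋ) := hdense.mono (by exact_mod_cast hext.1)
  have hadjH : H.adjoint ≤ H₀.adjoint := stmt12_adj_anti hdense hext
  have hdomeq : H.domain = H.adjoint.domain := by
    conv_lhs => rw [hH]
    rfl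
  have hact : ∀ x : H.domain, ∃ hx : (x : ℋ) ∈ H₀.adjoint.domain,
      H x = -H₀.adjoint (⟨(x : ℋ), hx⟩ : H₀.adjoint.domain) := by
    intro x
    have hxm : (x : ℋ) ∈ H.adjoint.domain := hdomeq ▸ x.2
    refine ⟨hadjH.1 hxm, ?_⟩
    have h1 : H x = (-H.adjoint) ⟨(x : ℋ), hxm⟩ := hH.le.2 rfl
    rw [h1, LinearPMap.neg_apply]
    congr 1
    exact hadjH.2 rfl
  have hsubH : H.domain ≤ H₀.adjoint.domain := fun z hz => (hact ⟨z, hz⟩).choose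
  have hHval : ∀ x : H.domain, H x = -(H₀.adjoint ⟨(x : ℋ), hsubH x.2⟩) :=
    fun x => (hact x).choose_spec
  -- skewness: boundary form vanishes on `D(H) × D(H)`
  have hskewH : ∀ x y : H.domain,
      ⟪Γ₁ ⟨(x : ℋ), hsubH x.2⟩, Γ₂ ⟨(y : ℋ), hsubH y.2⟩⟫_ℂ
        + ⟪Γ₂ ⟨(x : ℋ), hsubH x.2⟩, Γ₁ ⟨(y : ℋ), hsubH y.2⟩⟫_ℂ = 0 := by
    intro x y
    have hym : (y : ℋ) ∈ H.adjoint.domain := hdomeq ▸ y.2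
    obtain ⟨hy0, _, hbd⟩ := stmt12_lemB hdense hGreen hext hsubH hHval ⟨(y : ℋ), hym⟩
    exact hbd x
  -- the two boundary maps
  let ι : H.domain →ₗ[ℂ] H₀.adjoint.domain := Submodule.inclusion hsubH
  let S : H.domain →ₗ[ℂ] 𝒢 := (Γ₁ + Γ₂).comp ι
  let T : H.domain →ₗ[ℂ] 𝒢 := (Γ₁ - Γ₂).comp ι
  have hSapp : ∀ x : H.domain,
      S x = Γ₁ ⟨(x : ℋ), hsubH x.2⟩ + Γ₂ ⟨(x : ℋ), hsubH x.2⟩ := fun x => rfl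
  have hTapp : ∀ x : H.domain,
      T x = Γ₁ ⟨(x : ℋ), hsubH x.2⟩ - Γ₂ ⟨(x : ℋ), hsubH x.2⟩ := fun x => rfl
  have hST : ∀ x y : H.domain, ⟪S x, S y⟫_ℂ = ⟪T x, T y⟫_ℂ := by
    intro x y
    have hp := stmt12_polar (Γ₁ ⟨(x : ℋ), hsubH x.2⟩) (Γ₂ ⟨(x : ℋ), hsubH x.2⟩)
      (Γ₁ ⟨(y : ℋ), hsubH y.2⟩) (Γ₂ ⟨(y : ℋ), hsubH y.2⟩)
    rw [hskewH x y] at hp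
    rw [hSapp x, hSapp y, hTapp x, hTapp y]
    linear_combination -2 * hp
  -- membership from vanishing boundary form
  have hmem : ∀ w : H₀.adjoint.domain,
      (∀ x : H.domain, ⟪Γ₁ ⟨(x : ℋ), hsubH x.2⟩, Γ₂ w⟫_ℂ
        + ⟪Γ₂ ⟨(x : ℋ), hsubH x.2⟩, Γ₁ w⟫_ℂ = 0) → (w : ℋ) ∈ H.domain := by
    intro w hw
    have h1 := stmt12_lemA hdense hGreen hext hsubH hHval w hw
    exact hdomeq ▸ h1.choose
  -- density of the ranges of S and T
  have hdenseS : Dense ((LinearMap.range S : Submodule ℂ 𝒢) : Set 𝒢) := by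
    rw [Submodule.dense_iff_topologicalClosure_eq_top,
      Submodule.topologicalClosure_eq_top_iff, Submodule.eq_bot_iff]
    intro u hu
    rw [Submodule.mem_orthogonal] at hu
    obtain ⟨w, hw⟩ := hΓsurj (u, u)
    have hw1 : Γ₁ w = u := congrArg Prod.fst hw
    have hw2 : Γ₂ w = u := congrArg Prod.snd hw
    have hwm : (w : ℋ) ∈ H.domain := by
      apply hmem w
      intro x
      have := hu (S x) (LinearMap.mem_range_self S x)
      rw [hSapp x, inner_add_left] at this
      rw [hw1, hw2]
      linear_combination this
    have hSx : S ⟨(w : ℋ), hwm⟩ = u + u := by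
      rw [hSapp ⟨(w : ℋ), hwm⟩,
        show (⟨((⟨(w : ℋ), hwm⟩ : H.domain) : ℋ), hsubH hwm⟩ : H₀.adjoint.domain) = w from
          Subtype.ext rfl, hw1, hw2]
    have h2 := hu (S ⟨(w : ℋ), hwm⟩) (LinearMap.mem_range_self S _)
    rw [hSx, inner_add_left] at h2
    have h3 : ⟪u, u⟫_ℂ = 0 := by linear_combination h2 / 2
    exact inner_self_eq_zero.mp h3
  have hdenseT : Dense ((LinearMap.range T : Submodule ℂ 𝒢) : Set 𝒢) := by
    rw [Submodule.dense_iff_topologicalClosure_eq_top,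
      Submodule.topologicalClosure_eq_top_iff, Submodule.eq_bot_iff]
    intro u hu
    rw [Submodule.mem_orthogonal] at hu
    obtain ⟨w, hw⟩ := hΓsurj (u, -u)
    have hw1 : Γ₁ w = u := congrArg Prod.fst hw
    have hw2 : Γ₂ w = -u := congrArg Prod.snd hw
    have hwm : (w : ℋ) ∈ H.domain := by
      apply hmem w
      intro x
      have := hu (T x) (LinearMap.mem_range_self T x)
      rw [hTapp x, inner_sub_left] at this
      rw [hw1, hw2, inner_neg_right]
      linear_combination -this
    have hTx : T ⟨(w : ℋ), hwm⟩ = u + u := by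
      rw [hTapp ⟨(w : ℋ), hwm⟩,
        show (⟨((⟨(w : ℋ), hwm⟩ : H.domain) : ℋ), hsubH hwm⟩ : H₀.adjoint.domain) = w from
          Subtype.ext rfl, hw1, hw2]
      abel
    have h2 := hu (T ⟨(w : ℋ), hwm⟩) (LinearMap.mem_range_self T _)
    rw [hTx, inner_add_left] at h2
    have h3 : ⟪u, u⟫_ℂ = 0 := by linear_combination h2 / 2
    exact inner_self_eq_zero.mp h3
  obtain ⟨L, hLS⟩ := stmt12_unitary S T hST hdenseS hdenseT
  refine ⟨L, ?_, hact⟩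
  ext z
  simp only [SetLike.mem_coe, Set.mem_setOf_eq]
  constructor
  · intro hz
    refine ⟨hsubH hz, ?_⟩
    have h1 : L (Γ₁ (⟨z, hsubH hz⟩ : H₀.adjoint.domain) + Γ₂ (⟨z, hsubH hz⟩ : H₀.adjoint.domain))
        = Γ₁ (⟨z, hsubH hz⟩ : H₀.adjoint.domain) - Γ₂ (⟨z, hsubH hz⟩ : H₀.adjoint.domain) := by
      have := hLS ⟨z, hz⟩
      rwa [hSapp ⟨z, hz⟩, hTapp ⟨z, hz⟩] at this
    rw [map_add] at h1
    rw [show (⟨z, hsubH hz⟩ : H₀.adjoint.domain) = ⟨z, hsubH hz⟩ from rfl] at h1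
    rw [← sub_eq_zero] at h1
    rw [← h1]
    abel
  · rintro ⟨hz, h0⟩
    have h1 : L (Γ₁ (⟨z, hz⟩ : H₀.adjoint.domain) + Γ₂ (⟨z, hz⟩ : H₀.adjoint.domain))
        = Γ₁ (⟨z, hz⟩ : H₀.adjoint.domain) - Γ₂ (⟨z, hz⟩ : H₀.adjoint.domain) := by
      rw [map_add, ← sub_eq_zero, ← h0]
      abel
    apply hmem ⟨z, hz⟩
    intro x
    have hp := stmt12_polar (Γ₁ ⟨(x : ℋ), hsubH x.2⟩) (Γ₂ ⟨(x : ℋ), hsubH x.2⟩)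
      (Γ₁ (⟨z, hz⟩ : H₀.adjoint.domain)) (Γ₂ (⟨z, hz⟩ : H₀.adjoint.domain))
    have h2 : ⟪Γ₁ ⟨(x : ℋ), hsubH x.2⟩ - Γ₂ ⟨(x : ℋ), hsubH x.2⟩,
        Γ₁ (⟨z, hz⟩ : H₀.adjoint.domain) - Γ₂ (⟨z, hz⟩ : H₀.adjoint.domain)⟫_ℂ
        = ⟪Γ₁ ⟨(x : ℋ), hsubH x.2⟩ + Γ₂ ⟨(x : ℋ), hsubH x.2⟩,
          Γ₁ (⟨z, hz⟩ : H₀.adjoint.domain) + Γ₂ (⟨z, hz⟩ : H₀.adjoint.domain)⟫_ℂ := by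
      have hx := hLS x
      rw [hSapp x, hTapp x] at hx
      rw [← hx, ← h1, LinearIsometryEquiv.inner_map_map]
    rw [hp, h2, sub_self, zero_div]

/-- **Theorem B.** Let `(𝒢, Γ₁, Γ₂)` be a boundary triplet for the
skew-symmetric operator `H₀`. An operator `H ⊇ H₀` is skew-self-adjoint iff there is a
unitary `L : 𝒢 → 𝒢` with `D(H) = {x ∈ D(H₀*) : (L − 1)Γ₁x + (L + 1)Γ₂x = 0}` and
`Hx = −H₀*x` on `D(H)`. -/
theorem stmt_12 {ℋ 𝒢 : Type*}
    [NormedAddCommGroup ℋ] [InnerProductSpace ℂ ℋ] [CompleteSpace ℋ]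
    [NormedAddCommGroup 𝒢] [InnerProductSpace ℂ 𝒢] [CompleteSpace 𝒢]
    (H₀ : ℋ →ₗ.[ℂ] ℋ)
    (hdense : Dense (H₀.domain : Set ℋ)) (hclosed : H₀.IsClosed)
    (hskew : H₀ ≤ -H₀.adjoint)
    -- `(𝒢, Γ₁, Γ₂)` is a boundary triplet for `H₀`:
    (Γ₁ Γ₂ : H₀.adjoint.domain →ₗ[ℂ] 𝒢)
    (hΓsurj : Function.Surjective fun x : H₀.adjoint.domain => (Γ₁ x, Γ₂ x))
    (hGreen : ∀ x y : H₀.adjoint.domain,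
      ⟪H₀.adjoint x, (y : ℋ)⟫_ℂ + ⟪(x : ℋ), H₀.adjoint y⟫_ℂ
        = ⟪Γ₁ x, Γ₂ y⟫_ℂ + ⟪Γ₂ x, Γ₁ y⟫_ℂ)
    -- an extension `H ⊇ H₀`:
    (H : ℋ →ₗ.[ℂ] ℋ) (hext : H₀ ≤ H) :
    H = -H.adjoint ↔
      ∃ L : 𝒢 ≃ₗᵢ[ℂ] 𝒢,
        (H.domain : Set ℋ) = {x : ℋ | ∃ hx : x ∈ H₀.adjoint.domain,
            (L (Γ₁ (⟨x, hx⟩ : H₀.adjoint.domain)) - Γ₁ (⟨x, hx⟩ : H₀.adjoint.domain)) +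
              (L (Γ₂ (⟨x, hx⟩ : H₀.adjoint.domain)) + Γ₂ (⟨x, hx⟩ : H₀.adjoint.domain)) = 0} ∧
          ∀ x : H.domain, ∃ hx : (x : ℋ) ∈ H₀.adjoint.domain,
            H x = -H₀.adjoint (⟨(x : ℋ), hx⟩ : H₀.adjoint.domain) := by
  constructor
  · intro hH
    exact stmt12_mp hdense hΓsurj hGreen hext hH
  · rintro ⟨L, hdom, hact⟩
    exact stmt12_mpr hdense hΓsurj hGreen hext L hdom hact
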